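/- Suppose Ŝ ≥ 0. Let P₁ = Q̂/2 − 3P̂²/16, Q₁ = P̂³/32 − P̂Q̂/8 + R̂/4, Δ = (Q₁/2)² + (P₁/3)³, and assume Δ ≥ 0. Define z₁ = ∛(−Q₁/2 + √Δ) + ∛(−Q₁/2 − √Δ) − P̂/4, using real cube roots and the real square root of Δ. Then h has a positive real root if and only if z₁ > 0 and h(z₁) ≤ 0. -/

import Mathlib

noncomputable section

/-- Coefficient A = b₁+b₂−2a -/
def cA (a b₁ b₂ : ℝ) : ℝ := b₁ + b₂ - 2*a
/-- Coefficient B = b₁b₂−2a(b₁+b₂)+a²+2 -/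
def cB (a b₁ b₂ : ℝ) : ℝ := b₁*b₂ - 2*a*(b₁+b₂) + a^2 + 2
/-- Coefficient C = (a²+1)(b₁+b₂)−2ab₁b₂−2a -/
def cC (a b₁ b₂ : ℝ) : ℝ := (a^2+1)*(b₁+b₂) - 2*a*b₁*b₂ - 2*a
/-- Coefficient D = a²b₁b₂−a(b₁+b₂)+1 -/
def cD (a b₁ b₂ : ℝ) : ℝ := a^2*b₁*b₂ - a*(b₁+b₂) + 1
/-- Coefficient E = c² -/
def cE (c : ℝ) : ℝ := c^2
/-- P̂ = A²−2B -/
def qP (a b₁ b₂ c : ℝ) : ℝ := (cA a b₁ b₂)^2 - 2*(cB a b₁ b₂)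
/-- Q̂ = B²+2D−2AC−E² -/
def qQ (a b₁ b₂ c : ℝ) : ℝ :=
  (cB a b₁ b₂)^2 + 2*(cD a b₁ b₂) - 2*(cA a b₁ b₂)*(cC a b₁ b₂) - (cE c)^2
/-- R̂ = C²−2BD−E²(b₁²+b₂²) -/
def qR (a b₁ b₂ c : ℝ) : ℝ :=
  (cC a b₁ b₂)^2 - 2*(cB a b₁ b₂)*(cD a b₁ b₂) - (cE c)^2*(b₁^2+b₂^2)
/-- Ŝ = D²−E²(b₁b₂)² -/
def qS (a b₁ b₂ c : ℝ) : ℝ := (cD a b₁ b₂)^2 - (cE c)^2*(b₁*b₂)^2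
/-- Auxiliary quartic h(z) = z⁴+P̂z³+Q̂z²+R̂z+Ŝ -/
def hq (a b₁ b₂ c z : ℝ) : ℝ :=
  z^4 + qP a b₁ b₂ c * z^3 + qQ a b₁ b₂ c * z^2 + qR a b₁ b₂ c * z + qS a b₁ b₂ c
/-- Derivative h′(z) = 4z³+3P̂z²+2Q̂z+R̂ -/
def hq' (a b₁ b₂ c z : ℝ) : ℝ :=
  4*z^3 + 3*qP a b₁ b₂ c * z^2 + 2*qQ a b₁ b₂ c * z + qR a b₁ b₂ c
/-- Characteristic function P(λ) = λ⁴+Aλ³+Bλ²+Cλ+D − E(λ+b₁)(λ+b₂)e^{−2λτ} -/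
def charP (a b₁ b₂ c τ : ℝ) (z : ℂ) : ℂ :=
  z^4 + (cA a b₁ b₂ : ℂ)*z^3 + (cB a b₁ b₂ : ℂ)*z^2 + (cC a b₁ b₂ : ℂ)*z + (cD a b₁ b₂ : ℂ)
    - (cE c : ℂ) * (z + (b₁:ℂ)) * (z + (b₂:ℂ)) * Complex.exp (-(2*z*(τ:ℂ)))

/-- Real cube root. -/
def cbrt (x : ℝ) : ℝ := Real.sign x * |x| ^ ((1:ℝ)/3)

lemma cbrt_pow3 (x : ℝ) : (cbrt x)^3 = x := by
  unfold cbrt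
  rw [mul_pow, ← Real.rpow_natCast (|x| ^ ((1:ℝ)/3)) 3, ← Real.rpow_mul (abs_nonneg x)]
  norm_num
  rcases lt_trichotomy x 0 with h|h|h
  · rw [Real.sign_of_neg h, abs_of_neg h]; ring
  · simp [h]
  · rw [Real.sign_of_pos h, abs_of_pos h]; ring

lemma cube_inj {x y : ℝ} (h : x^3 = y^3) : x = y :=
  (Odd.strictMono_pow (R := ℝ) (by decide : Odd 3)).injective h

/-- The generic quartic. -/
def qf (P Q R S z : ℝ) : ℝ := z^4 + P*z^3 + Q*z^2 + R*z + S

lemma quartic_big (P Q R S M : ℝ) : ∃ N, M ≤ N ∧ 0 < qf P Q R S N := by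
  set N := max M (1 + |P| + |Q| + |R| + |S|) with hNdef
  refine ⟨N, le_max_left _ _, ?_⟩
  have habs : 1 + |P| + |Q| + |R| + |S| ≤ N := le_max_right _ _
  have hN1 : (1:ℝ) ≤ N := by
    have := abs_nonneg P; have := abs_nonneg Q; have := abs_nonneg R; have := abs_nonneg S
    linarith
  have hN0 : (0:ℝ) < N := by linarith
  have h3 : (0:ℝ) < N^3 := by positivity
  have p23 : N^2 ≤ N^3 := pow_le_pow_right₀ hN1 (by norm_num)
  have p13 : N ≤ N^3 := by
    calc N = N^1 := (pow_one N).symm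
    _ ≤ N^3 := pow_le_pow_right₀ hN1 (by norm_num)
  have p03 : (1:ℝ) ≤ N^3 := by
    have := pow_le_pow_left₀ (by norm_num : (0:ℝ) ≤ 1) hN1 3
    simpa using this
  have e1 : (-|P|)*N^3 ≤ P*N^3 := mul_le_mul_of_nonneg_right (neg_abs_le P) h3.le
  have e2 : (-|Q|)*N^3 ≤ Q*N^2 := by
    have a1 : (-|Q|)*N^3 ≤ (-|Q|)*N^2 := by
      have := mul_le_mul_of_nonneg_left p23 (abs_nonneg Q); linarith
    have a2 : (-|Q|)*N^2 ≤ Q*N^2 := mul_le_mul_of_nonneg_right (neg_abs_le Q) (by positivity)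
    linarith
  have e3 : (-|R|)*N^3 ≤ R*N := by
    have a1 : (-|R|)*N^3 ≤ (-|R|)*N := by
      have := mul_le_mul_of_nonneg_left p13 (abs_nonneg R); linarith
    have a2 : (-|R|)*N ≤ R*N := mul_le_mul_of_nonneg_right (neg_abs_le R) hN0.le
    linarith
  have e4 : (-|S|)*N^3 ≤ S := by
    have a1 : (-|S|)*N^3 ≤ -|S| := by
      have := mul_le_mul_of_nonneg_left p03 (abs_nonneg S); linarith
    linarith [neg_abs_le S]
  have e5 : (|P|+|Q|+|R|+|S|) * N^3 ≤ (N-1)*N^3 :=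
    mul_le_mul_of_nonneg_right (by linarith) h3.le
  have : 0 < N^4 + P*N^3 + Q*N^2 + R*N + S := by nlinarith [h3]
  simpa [qf] using this

lemma quartic_deriv (P Q R S : ℝ) (z : ℝ) :
    HasDerivAt (fun z : ℝ => qf P Q R S z) (4*z^3 + 3*P*z^2 + 2*Q*z + R) z := by
  have h := (((hasDerivAt_pow 4 z).add ((hasDerivAt_pow 3 z).const_mul P)).add
      ((hasDerivAt_pow 2 z).const_mul Q)).add (((hasDerivAt_id z).const_mul R).add_const S)
  refine HasDerivAt.congr_deriv (HasDerivAt.congr_of_eventuallyEq h (Filter.EventuallyEq.of_eq ?_)) ?_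
  · funext w; simp only [id_eq, qf, Pi.add_apply]; ring
  · push_cast; ring

lemma quartic_cont (P Q R S : ℝ) : Continuous (fun z : ℝ => qf P Q R S z) := by
  unfold qf; fun_prop

lemma quartic_not_zero_on_Icc (P Q R S z : ℝ) (hz : 0 < z)
    (hall : ∀ t ∈ Set.Icc (0:ℝ) z, qf P Q R S t = 0) : False := by
  set p : Polynomial ℝ := Polynomial.X^4 + Polynomial.C P * Polynomial.X^3
    + Polynomial.C Q * Polynomial.X^2 + Polynomial.C R * Polynomial.X + Polynomial.C S with hp
  have hpeval : ∀ t, p.eval t = qf P Q R S t := by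
    intro t; simp [hp, qf]
  have hpz : p = 0 := by
    apply Polynomial.eq_zero_of_infinite_isRoot
    apply Set.Infinite.mono (s := Set.Icc (0:ℝ) z)
    · intro t ht
      simp only [Set.mem_setOf_eq, Polynomial.IsRoot]
      rw [hpeval]; exact hall t ht
    · exact Set.Icc_infinite hz
  obtain ⟨N, hN, hNpos⟩ := quartic_big P Q R S 0
  have hNz : qf P Q R S N = 0 := by rw [← hpeval, hpz]; simp
  linarith

lemma quartic_key (P Q R S P₁ Q₁ Δ z₁ : ℝ) (hS : 0 ≤ S)
    (hP₁ : P₁ = Q/2 - 3*P^2/16)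
    (hQ₁ : Q₁ = P^3/32 - P*Q/8 + R/4)
    (hΔ : Δ = (Q₁/2)^2 + (P₁/3)^3) (hΔ0 : 0 ≤ Δ)
    (hz₁ : z₁ = cbrt (-Q₁/2 + Real.sqrt Δ) + cbrt (-Q₁/2 - Real.sqrt Δ) - P/4) :
    (∃ z, 0 < z ∧ qf P Q R S z = 0) ↔ (0 < z₁ ∧ qf P Q R S z₁ ≤ 0) := by
  set α := cbrt (-Q₁/2 + Real.sqrt Δ) with hαdef
  set β := cbrt (-Q₁/2 - Real.sqrt Δ) with hβdef
  have hα : α^3 = -Q₁/2 + Real.sqrt Δ := cbrt_pow3 _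
  have hβ : β^3 = -Q₁/2 - Real.sqrt Δ := cbrt_pow3 _
  have hsq : Real.sqrt Δ ^ 2 = Δ := Real.sq_sqrt hΔ0
  have hab : α * β = -(P₁/3) := by
    apply cube_inj
    rw [mul_pow, hα, hβ]
    linear_combination -hsq - hΔ
  have hu : z₁ + P/4 = α + β := by rw [hz₁]; ring
  have hroot : (z₁+P/4)^3 + P₁*(z₁+P/4) + Q₁ = 0 := by
    rw [hu]; linear_combination hα + hβ + (3*(α+β))*hab
  have hroot' : (z₁+P/4)^3 + (Q/2 - 3*P^2/16)*(z₁+P/4) + (P^3/32 - P*Q/8 + R/4) = 0 := by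
    rw [← hP₁, ← hQ₁]; exact hroot
  have hm : 0 ≤ 2*(z₁+P/4)^2 + 2*(Q/2 - 3*P^2/16) := by
    rw [← hP₁, hu]
    nlinarith [sq_nonneg (α-β), sq_nonneg α, sq_nonneg β, hab]
  have hminid : ∀ z, qf P Q R S z - qf P Q R S z₁
      = (z - z₁)^2 * ((z + z₁ + P/2)^2 + 2*(z₁+P/4)^2 + 2*(Q/2 - 3*P^2/16)) := by
    intro z
    unfold qf
    linear_combination (4*(z - z₁)) * hroot'
  have hmin : ∀ z, qf P Q R S z₁ ≤ qf P Q R S z := by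
    intro z
    have h1 : 0 ≤ (z + z₁ + P/2)^2 + 2*(z₁+P/4)^2 + 2*(Q/2 - 3*P^2/16) := by
      linarith [sq_nonneg (z + z₁ + P/2)]
    have h2 := mul_nonneg (sq_nonneg (z - z₁)) h1
    linarith [hminid z]
  have hquad : ∀ z, 0 ≤ (z+P/4)^2 + (z₁+P/4)*(z+P/4) + (z₁+P/4)^2 + P₁ := by
    intro z
    rw [hu]
    nlinarith [sq_nonneg (z + P/4 + (α+β)/2), sq_nonneg (α-β), hab]
  have hdsign : ∀ z, z₁ ≤ z → 0 ≤ 4*z^3 + 3*P*z^2 + 2*Q*z + R := by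
    intro z hz
    have hfac : 4*z^3 + 3*P*z^2 + 2*Q*z + R
        = 4*(z - z₁)*((z+P/4)^2 + (z₁+P/4)*(z+P/4) + (z₁+P/4)^2 + P₁) := by
      linear_combination 4*hroot + (-4*z - P)*hP₁ + (-4)*hQ₁
    rw [hfac]
    exact mul_nonneg (by linarith) (hquad z)
  have hmono : MonotoneOn (fun z => qf P Q R S z) (Set.Ici z₁) := by
    apply monotoneOn_of_deriv_nonneg (convex_Ici z₁) (quartic_cont P Q R S).continuousOn
    · intro x _
      exact (quartic_deriv P Q R S x).differentiableAt.differentiableWithinAt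
    · intro x hx
      rw [(quartic_deriv P Q R S x).deriv]
      rw [interior_Ici] at hx
      exact hdsign x (le_of_lt hx)
  constructor
  · rintro ⟨z, hz0, hfz⟩
    have hfz₁le : qf P Q R S z₁ ≤ 0 := by linarith [hmin z]
    refine ⟨?_, hfz₁le⟩
    by_contra hle
    push_neg at hle
    have hf0 : qf P Q R S 0 = S := by simp [qf]
    have hmem0 : (0:ℝ) ∈ Set.Ici z₁ := hle
    have hmemz : z ∈ Set.Ici z₁ := le_trans hle hz0.le
    have hf0le : qf P Q R S 0 ≤ qf P Q R S z := hmono hmem0 hmemz hz0.le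
    have hf00 : qf P Q R S 0 = 0 := le_antisymm (by linarith) (by rw [hf0]; exact hS)
    apply quartic_not_zero_on_Icc P Q R S z hz0
    intro t ht
    have h1 : qf P Q R S 0 ≤ qf P Q R S t := hmono hmem0 (le_trans hle ht.1) ht.1
    have h2 : qf P Q R S t ≤ qf P Q R S z := hmono (le_trans hle ht.1) hmemz ht.2
    rw [hf00] at h1; rw [hfz] at h2; linarith
  · rintro ⟨hz₁pos, hfle⟩
    obtain ⟨N, hN, hNpos⟩ := quartic_big P Q R S z₁
    have hcontOn : ContinuousOn (fun z => qf P Q R S z) (Set.Icc z₁ N) :=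
      (quartic_cont P Q R S).continuousOn
    have h0mem : (0:ℝ) ∈ Set.Icc (qf P Q R S z₁) (qf P Q R S N) := ⟨hfle, hNpos.le⟩
    obtain ⟨t, htmem, htval⟩ := intermediate_value_Icc hN hcontOn h0mem
    exact ⟨t, lt_of_lt_of_le hz₁pos htmem.1, htval⟩

theorem stmt_1 (a b₁ b₂ c : ℝ) (ha : 0 < a) (hb₁ : 0 < b₁) (hb₂ : 0 < b₂)
    (hS0 : 0 ≤ qS a b₁ b₂ c)
    (P₁ Q₁ Δ z₁ : ℝ)
    (hP₁ : P₁ = qQ a b₁ b₂ c / 2 - 3 * (qP a b₁ b₂ c)^2 / 16)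
    (hQ₁ : Q₁ = (qP a b₁ b₂ c)^3 / 32 - qP a b₁ b₂ c * qQ a b₁ b₂ c / 8 + qR a b₁ b₂ c / 4)
    (hΔ : Δ = (Q₁/2)^2 + (P₁/3)^3) (hΔ0 : 0 ≤ Δ)
    (hz₁ : z₁ = cbrt (-Q₁/2 + Real.sqrt Δ) + cbrt (-Q₁/2 - Real.sqrt Δ) - qP a b₁ b₂ c / 4) :
    (∃ z : ℝ, 0 < z ∧ hq a b₁ b₂ c z = 0) ↔ (0 < z₁ ∧ hq a b₁ b₂ c z₁ ≤ 0) := by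
  have key := quartic_key (qP a b₁ b₂ c) (qQ a b₁ b₂ c) (qR a b₁ b₂ c) (qS a b₁ b₂ c)
    P₁ Q₁ Δ z₁ hS0 hP₁ hQ₁ hΔ hΔ0 hz₁
  have hfq : ∀ z, hq a b₁ b₂ c z = qf (qP a b₁ b₂ c) (qQ a b₁ b₂ c) (qR a b₁ b₂ c) (qS a b₁ b₂ c) z := by
    intro z; simp [hq, qf]
  simp only [hfq]
  exact key
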